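/- Let c > 0 and η ∈ ℝ. Then ∫_0^∞ e^{-ctv} / √|v-η| dv ≲ t^{-1/2} for all t ≥ 1, with implied constant independent of η. -/

import Mathlib

open MeasureTheory

private lemma aux_sqrt_rpow (x : ℝ) (hx : 0 ≤ x) :
    1 / Real.sqrt x = x ^ (-(1/2) : ℝ) := by
  rw [Real.sqrt_eq_rpow, Real.rpow_neg hx, one_div]

private lemma aux_int_pos (b : ℝ) (hb : 0 ≤ b) :
    IntervalIntegrable (fun u : ℝ => |u| ^ (-(1/2) : ℝ)) volume 0 b := by
  have h := intervalIntegral.intervalIntegrable_rpow' (r := -(1/2)) (by norm_num)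
    (a := 0) (b := b)
  rw [intervalIntegrable_iff] at h ⊢
  refine h.congr_fun ?_ measurableSet_uIoc
  intro u hu
  rw [Set.uIoc_of_le hb] at hu
  simp [abs_of_pos hu.1]

private lemma aux_val_pos (b : ℝ) (hb : 0 ≤ b) :
    ∫ u in (0:ℝ)..b, |u| ^ (-(1/2) : ℝ) = 2 * Real.sqrt b := by
  have heq : Set.EqOn (fun u : ℝ => |u| ^ (-(1/2) : ℝ))
      (fun u : ℝ => u ^ (-(1/2) : ℝ)) (Set.uIcc 0 b) := by
    intro u hu
    rw [Set.uIcc_of_le hb] at hu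
    simp [abs_of_nonneg hu.1]
  rw [intervalIntegral.integral_congr heq, integral_rpow (Or.inl (by norm_num))]
  rw [Real.sqrt_eq_rpow]
  norm_num
  ring

private lemma aux_int_neg (b : ℝ) (hb : 0 ≤ b) :
    IntervalIntegrable (fun u : ℝ => |u| ^ (-(1/2) : ℝ)) volume (-b) 0 := by
  have h := (IntervalIntegrable.iff_comp_neg).mp (aux_int_pos b hb)
  simp only [abs_neg, neg_zero] at h
  exact h.symm

private lemma aux_val_neg (b : ℝ) (hb : 0 ≤ b) :
    ∫ u in (-b)..(0:ℝ), |u| ^ (-(1/2) : ℝ) = 2 * Real.sqrt b := by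
  have h := intervalIntegral.integral_comp_neg (a := 0) (b := b)
    (fun u : ℝ => |u| ^ (-(1/2) : ℝ))
  simp only [abs_neg, neg_zero] at h
  rw [← h, aux_val_pos b hb]

/-- ∫_0^∞ e^{-ctv}/√|v-η| dv ≲ t^{-1/2} uniformly in η ∈ ℝ, for t ≥ 1. -/
theorem stmt12 (c : ℝ) (hc : 0 < c) :
    ∃ C > 0, ∀ (η t : ℝ), 1 ≤ t →
      (∫ v in Set.Ioi (0:ℝ), Real.exp (-c * t * v) / Real.sqrt |v - η|) ≤
        C * t ^ (-(1:ℝ)/2) := by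
  refine ⟨4 + 1/c, by positivity, ?_⟩
  intro η t ht
  have ht0 : (0 : ℝ) < t := lt_of_lt_of_le one_pos ht
  have hct : (0 : ℝ) < c * t := mul_pos hc ht0
  set δ : ℝ := t⁻¹ with hδ
  have hδ0 : 0 < δ := inv_pos.mpr ht0
  have hle : η - δ ≤ η + δ := by linarith
  -- shifted function
  set F : ℝ → ℝ := fun v => |v - η| ^ (-(1/2) : ℝ) with hF
  -- interval integrability and value for F on [η-δ, η+δ]
  have hFint : IntervalIntegrable F volume (η - δ) (η + δ) := by
    have h := ((aux_int_neg δ hδ0.le).trans (aux_int_pos δ hδ0.le)).comp_sub_right η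
    have e1 : -δ + η = η - δ := by ring
    have e2 : δ + η = η + δ := by ring
    rwa [e1, e2] at h
  have hFval : ∫ v in (η - δ)..(η + δ), F v = 4 * Real.sqrt δ := by
    have h := intervalIntegral.integral_comp_sub_right
      (a := η - δ) (b := η + δ) (fun u : ℝ => |u| ^ (-(1/2) : ℝ)) η
    have e1 : η - δ - η = -δ := by ring
    have e2 : η + δ - η = δ := by ring
    rw [e1, e2] at h
    rw [hF]
    rw [h, ← intervalIntegral.integral_add_adjacent_intervals
      (aux_int_neg δ hδ0.le) (aux_int_pos δ hδ0.le),
      aux_val_neg δ hδ0.le, aux_val_pos δ hδ0.le]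
    ring
  have hFIoc : IntegrableOn F (Set.Ioc (η - δ) (η + δ)) volume :=
    (intervalIntegrable_iff_integrableOn_Ioc_of_le hle).mp hFint
  have hFIcc : IntegrableOn F (Set.Icc (η - δ) (η + δ)) volume :=
    (integrableOn_Icc_iff_integrableOn_Ioc).mpr hFIoc
  -- indicator function
  set g1 : ℝ → ℝ := (Set.Icc (η - δ) (η + δ)).indicator F with hg1
  have hg1int : Integrable g1 volume :=
    (integrable_indicator_iff measurableSet_Icc).mpr hFIcc
  have hg1nonneg : ∀ v, 0 ≤ g1 v := by
    intro v
    apply Set.indicator_nonneg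
    intro x _
    positivity
  -- exponential part
  have hexpint : IntegrableOn (fun v : ℝ => Real.exp (-(c * t) * v)) (Set.Ioi 0) volume :=
    exp_neg_integrableOn_Ioi 0 hct
  have hg2int : IntegrableOn (fun v : ℝ => Real.sqrt t * Real.exp (-(c * t) * v))
      (Set.Ioi 0) volume := hexpint.const_mul _
  set g : ℝ → ℝ := fun v => g1 v + Real.sqrt t * Real.exp (-(c * t) * v) with hg
  have hgint : IntegrableOn g (Set.Ioi 0) volume :=
    (hg1int.restrict (s := Set.Ioi 0)).add hg2int
  -- key: δ^(-1/2) = √t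
  have hδpow : δ ^ (-(1/2) : ℝ) = Real.sqrt t := by
    rw [hδ, Real.inv_rpow ht0.le, Real.rpow_neg ht0.le, inv_inv, Real.sqrt_eq_rpow]
  -- pointwise bound on Ioi 0
  have hbound : ∀ v ∈ Set.Ioi (0:ℝ),
      Real.exp (-c * t * v) / Real.sqrt |v - η| ≤ g v := by
    intro v hv
    have hv0 : 0 < v := hv
    have habs : (0:ℝ) ≤ |v - η| := abs_nonneg _
    have hrw : Real.exp (-c * t * v) / Real.sqrt |v - η|
        = Real.exp (-(c * t) * v) * |v - η| ^ (-(1/2) : ℝ) := by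
      rw [div_eq_mul_one_div, aux_sqrt_rpow _ habs]
      ring_nf
    have hexple : Real.exp (-(c * t) * v) ≤ 1 := by
      rw [Real.exp_le_one_iff]
      nlinarith
    rw [hrw]
    show _ ≤ g1 v + Real.sqrt t * Real.exp (-(c * t) * v)
    by_cases hmem : v ∈ Set.Icc (η - δ) (η + δ)
    · have : g1 v = F v := Set.indicator_of_mem hmem F
      rw [this]
      have h1 : Real.exp (-(c * t) * v) * |v - η| ^ (-(1/2) : ℝ) ≤ F v := by
        calc Real.exp (-(c * t) * v) * |v - η| ^ (-(1/2) : ℝ)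
            ≤ 1 * |v - η| ^ (-(1/2) : ℝ) :=
              mul_le_mul_of_nonneg_right hexple (Real.rpow_nonneg habs _)
          _ = F v := by rw [one_mul]
      have h2 : 0 ≤ Real.sqrt t * Real.exp (-(c * t) * v) := by positivity
      linarith
    · have : g1 v = 0 := Set.indicator_of_notMem hmem F
      rw [this, zero_add]
      have hfar : δ ≤ |v - η| := by
        by_contra hcon
        push_neg at hcon
        rcases abs_le.mp hcon.le with ⟨h1, h2⟩
        exact hmem ⟨by linarith, by linarith⟩
      have hpow : |v - η| ^ (-(1/2) : ℝ) ≤ Real.sqrt t := by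
        rw [← hδpow]
        exact Real.rpow_le_rpow_of_nonpos hδ0 hfar (by norm_num)
      calc Real.exp (-(c * t) * v) * |v - η| ^ (-(1/2) : ℝ)
          ≤ Real.exp (-(c * t) * v) * Real.sqrt t :=
            mul_le_mul_of_nonneg_left hpow (Real.exp_nonneg _)
        _ = Real.sqrt t * Real.exp (-(c * t) * v) := by ring
  -- bound the integral by the integral of g
  have hmono : (∫ v in Set.Ioi (0:ℝ), Real.exp (-c * t * v) / Real.sqrt |v - η|)
      ≤ ∫ v in Set.Ioi (0:ℝ), g v := by
    refine integral_mono_of_nonneg ?_ hgint ?_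
    · exact ae_of_all _ fun v => by positivity
    · exact (ae_restrict_iff' measurableSet_Ioi).mpr (ae_of_all _ hbound)
  -- compute/bound ∫ g
  have hsplit : (∫ v in Set.Ioi (0:ℝ), g v)
      = (∫ v in Set.Ioi (0:ℝ), g1 v)
        + ∫ v in Set.Ioi (0:ℝ), Real.sqrt t * Real.exp (-(c * t) * v) :=
    integral_add (hg1int.restrict (s := Set.Ioi 0)) hg2int
  have hnear : (∫ v in Set.Ioi (0:ℝ), g1 v) ≤ 4 * Real.sqrt δ := by
    have h1 : (∫ v in Set.Ioi (0:ℝ), g1 v) ≤ ∫ v, g1 v :=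
      setIntegral_le_integral hg1int (ae_of_all _ hg1nonneg)
    have h2 : (∫ v, g1 v) = ∫ v in Set.Icc (η - δ) (η + δ), F v := by
      rw [hg1, integral_indicator measurableSet_Icc]
    have h3 : (∫ v in Set.Icc (η - δ) (η + δ), F v) = 4 * Real.sqrt δ := by
      rw [MeasureTheory.integral_Icc_eq_integral_Ioc,
        ← intervalIntegral.integral_of_le hle, hFval]
    linarith
  have hfar : (∫ v in Set.Ioi (0:ℝ), Real.sqrt t * Real.exp (-(c * t) * v))
      = Real.sqrt t * (c * t)⁻¹ := by
    rw [integral_const_mul]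
    congr 1
    have h := integral_comp_mul_left_Ioi (fun x : ℝ => Real.exp (-x)) 0 hct
    simp only [mul_zero, smul_eq_mul] at h
    have hrw : (fun v : ℝ => Real.exp (-(c * t) * v)) = fun v => Real.exp (-(c * t * v)) := by
      funext v; rw [neg_mul]
    rw [hrw, h, integral_exp_neg_Ioi_zero, mul_one]
  -- final arithmetic
  have hst : Real.sqrt t * Real.sqrt t = t := Real.mul_self_sqrt ht0.le
  have hstpos : 0 < Real.sqrt t := Real.sqrt_pos.mpr ht0
  have hrhs : t ^ (-(1:ℝ)/2) = (Real.sqrt t)⁻¹ := by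
    rw [Real.sqrt_eq_rpow, ← Real.rpow_neg ht0.le]
    norm_num
  have hsqδ : Real.sqrt δ = (Real.sqrt t)⁻¹ := by
    rw [hδ, Real.sqrt_inv]
  have hfar' : Real.sqrt t * (c * t)⁻¹ = (1/c) * (Real.sqrt t)⁻¹ := by
    rw [← hst]
    field_simp
    simp only [Real.sqrt_sq hstpos.le, Real.sqrt_mul_self hstpos.le]
  calc (∫ v in Set.Ioi (0:ℝ), Real.exp (-c * t * v) / Real.sqrt |v - η|)
      ≤ ∫ v in Set.Ioi (0:ℝ), g v := hmono
    _ = (∫ v in Set.Ioi (0:ℝ), g1 v)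
        + ∫ v in Set.Ioi (0:ℝ), Real.sqrt t * Real.exp (-(c * t) * v) := hsplit
    _ ≤ 4 * Real.sqrt δ + Real.sqrt t * (c * t)⁻¹ := by
        rw [hfar]; linarith
    _ = (4 + 1/c) * t ^ (-(1:ℝ)/2) := by
        rw [hrhs, hsqδ, hfar']; ring
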